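/- For every s with r ≤ s ≤ n-1 and every i with 0 ≤ i ≤ n-1, the p-th convolution power of z_{p^s} satisfies z_{p^s}^p(t^{p^i}) = f^{p^{s-r}}·δ_{i,s-r} (equal to f^{p^{s-r}} if i = s-r, and 0 otherwise); in particular z_{p^s}^p ≠ 0 in H for r ≤ s ≤ n-1. -/

import Mathlib

open Polynomial TensorProduct

noncomputable section

/-- The truncated polynomial algebra `K[t]/(t^{p^n})`, underlying the Hopf algebra
`H_{n,r,f}`. -/
abbrev TruncAlg (K : Type) [Field K] (p n : ℕ) : Type :=
  AdjoinRoot (X ^ p ^ n : K[X])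

/-- `t`, the image of `X` in `K[t]/(t^{p^n})`. -/
def tgen (K : Type) [Field K] (p n : ℕ) : TruncAlg K p n :=
  AdjoinRoot.root _

/-- The basis `1, t, t^2, …, t^{p^n-1}` of `K[t]/(t^{p^n})`. -/
def tbasis (K : Type) [Field K] (p n : ℕ) :
    Module.Basis (Fin (p ^ n)) K (TruncAlg K p n) :=
  (AdjoinRoot.powerBasis (f := (X ^ p ^ n : K[X]))
    (pow_ne_zero _ Polynomial.X_ne_zero)).basis.reindex
    (finCongr (by simp))

/-- The dual basis functional `z_j ∈ H = H_{n,r,f}^*`, with `z_j (t^i) = δ_{ij}`;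
junk value `0` out of range. -/
def zdual (K : Type) [Field K] (p n : ℕ) (j : ℕ) :
    Module.Dual K (TruncAlg K p n) :=
  if h : j < p ^ n then (tbasis K p n).coord ⟨j, h⟩ else 0

/-- The coefficient `1/(ℓ!(p-ℓ)!)`, computed in the prime field of `K`. -/
def pfCoeff (K : Type) [Field K] (p ℓ : ℕ) : K :=
  ((ℓ.factorial * (p - ℓ).factorial : ℕ) : K)⁻¹

/-- The element `Δ(t) = t⊗1 + 1⊗t + f Σ_{ℓ=1}^{p-1} (1/(ℓ!(p-ℓ)!)) t^{p^r ℓ} ⊗ t^{p^r (p-ℓ)}`. -/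
def Delta_t (K : Type) [Field K] (p n r : ℕ) (f : K) :
    TruncAlg K p n ⊗[K] TruncAlg K p n :=
  tgen K p n ⊗ₜ 1 + 1 ⊗ₜ tgen K p n +
    f • ∑ ℓ ∈ Finset.Icc 1 (p - 1),
      pfCoeff K p ℓ • ((tgen K p n ^ (p ^ r * ℓ)) ⊗ₜ[K] (tgen K p n ^ (p ^ r * (p - ℓ))))

/-- The comultiplication of `H_{n,r,f}` as a linear map, determined by `Δ(t^i) = Δ(t)^i`
(it is the unique `K`-algebra map with `t ↦ Δ(t)`). -/
def DeltaMap (K : Type) [Field K] (p n r : ℕ) (f : K) :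
    TruncAlg K p n →ₗ[K] TruncAlg K p n ⊗[K] TruncAlg K p n :=
  (tbasis K p n).constr K fun i => (Delta_t K p n r f) ^ (i : ℕ)

/-- Convolution product on `H = (H_{n,r,f})^*`:  `(z * z')(h) = mult ((z ⊗ z')(Δ h))`. -/
def conv (K : Type) [Field K] (p n r : ℕ) (f : K)
    (z z' : Module.Dual K (TruncAlg K p n)) : Module.Dual K (TruncAlg K p n) :=
  (LinearMap.mul' K K) ∘ₗ (TensorProduct.map z z') ∘ₗ DeltaMap K p n r f

/-- Convolution powers; the 0th power is the unit `z_0 = ε` of `H`. -/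
def convPow (K : Type) [Field K] (p n r : ℕ) (f : K)
    (z : Module.Dual K (TruncAlg K p n)) : ℕ → Module.Dual K (TruncAlg K p n)
  | 0 => zdual K p n 0
  | m + 1 => conv K p n r f (convPow K p n r f z m) z

/-- The convolution product `z_1^{j 0} · z_p^{j 1} ⋯ z_{p^{m-1}}^{j (m-1)}` in `H`. -/
def zprod (K : Type) [Field K] (p n r : ℕ) (f : K)
    (j : ℕ → ℕ) : ℕ → Module.Dual K (TruncAlg K p n)
  | 0 => zdual K p n 0
  | m + 1 => conv K p n r f (zprod K p n r f j m)
      (convPow K p n r f (zdual K p n (p ^ m)) (j m))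



set_option linter.unusedSectionVars false
set_option maxHeartbeats 1000000

section AuxLemmas

variable (p : ℕ) [Fact p.Prime] (K : Type) [Field K] [CharP K p] (n r : ℕ) (f : K)

lemma tgen_pow_eq_zero {k : ℕ} (hk : p ^ n ≤ k) : tgen K p n ^ k = 0 := by
  have h0 : tgen K p n ^ p ^ n = 0 := by
    rw [tgen, ← AdjoinRoot.mk_X, ← map_pow, AdjoinRoot.mk_self]
  have h : tgen K p n ^ k = tgen K p n ^ p ^ n * tgen K p n ^ (k - p ^ n) := by
    rw [← pow_add, Nat.add_sub_cancel' hk]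
  rw [h, h0, zero_mul]

lemma tbasis_apply {k : ℕ} (hk : k < p ^ n) :
    tbasis K p n ⟨k, hk⟩ = tgen K p n ^ k := by
  rw [tbasis, Module.Basis.reindex_apply, PowerBasis.basis_eq_pow, AdjoinRoot.powerBasis_gen]
  simp [tgen, finCongr]

lemma zdual_tgen_pow {j : ℕ} (k : ℕ) (hj : j < p ^ n) :
    zdual K p n j (tgen K p n ^ k) = if j = k then 1 else 0 := by
  rw [zdual, dif_pos hj]
  by_cases hk : k < p ^ n
  · rw [← tbasis_apply p K n hk, Module.Basis.coord_apply, Module.Basis.repr_self]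
    simp [Finsupp.single_apply, Fin.ext_iff, eq_comm]
  · rw [tgen_pow_eq_zero p K n (le_of_not_gt hk), map_zero, if_neg (by omega)]

lemma charP_T2 : CharP (TruncAlg K p n ⊗[K] TruncAlg K p n) p := by
  have hpn : 0 < p ^ n := pow_pos (Fact.out : p.Prime).pos n
  haveI : Nontrivial (TruncAlg K p n ⊗[K] TruncAlg K p n) := by
    have b := Module.Basis.tensorProduct (tbasis K p n) (tbasis K p n)
    exact nontrivial_of_ne _ _ (b.ne_zero (⟨0, hpn⟩, ⟨0, hpn⟩))
  exact charP_of_injective_algebraMap (algebraMap K _).injective p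

lemma pfCoeff_pow (ℓ i : ℕ) : pfCoeff K p ℓ ^ p ^ i = pfCoeff K p ℓ := by
  have h : ((ℓ.factorial * (p - ℓ).factorial : ℕ) : K) ^ p ^ i
      = ((ℓ.factorial * (p - ℓ).factorial : ℕ) : K) := by
    have := map_natCast (iterateFrobenius K p i) (ℓ.factorial * (p - ℓ).factorial)
    rwa [iterateFrobenius_def] at this
  rw [pfCoeff, inv_pow, h]

lemma Delta_t_pow (i : ℕ) :
    Delta_t K p n r f ^ p ^ i =
      (tgen K p n ^ p ^ i) ⊗ₜ[K] 1 + 1 ⊗ₜ[K] (tgen K p n ^ p ^ i) +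
        f ^ p ^ i • ∑ ℓ ∈ Finset.Icc 1 (p - 1),
          pfCoeff K p ℓ •
            ((tgen K p n ^ (p ^ (r + i) * ℓ)) ⊗ₜ[K] (tgen K p n ^ (p ^ (r + i) * (p - ℓ)))) := by
  haveI := charP_T2 p K n
  have hφ : ∀ x : TruncAlg K p n ⊗[K] TruncAlg K p n,
      iterateFrobenius (TruncAlg K p n ⊗[K] TruncAlg K p n) p i x = x ^ p ^ i :=
    fun x => iterateFrobenius_def p i x
  rw [Delta_t, ← hφ, map_add, map_add]
  congr 1
  · congr 1
    · rw [hφ, Algebra.TensorProduct.tmul_pow, one_pow]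
    · rw [hφ, Algebra.TensorProduct.tmul_pow, one_pow]
  · rw [hφ, _root_.smul_pow, ← hφ, map_sum]
    congr 1
    refine Finset.sum_congr rfl fun ℓ hℓ => ?_
    rw [hφ, _root_.smul_pow, pfCoeff_pow, Algebra.TensorProduct.tmul_pow, ← pow_mul, ← pow_mul]
    congr 3 <;> rw [pow_add] <;> ring

lemma DeltaMap_tgen_pow {k : ℕ} (hk : k < p ^ n) :
    DeltaMap K p n r f (tgen K p n ^ k) = Delta_t K p n r f ^ k := by
  rw [← tbasis_apply p K n hk, DeltaMap, Module.Basis.constr_basis]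

lemma conv_eval (z z' : Module.Dual K (TruncAlg K p n)) (i : ℕ) (hk : p ^ i < p ^ n) :
    conv K p n r f z z' (tgen K p n ^ p ^ i) =
      z (tgen K p n ^ p ^ i) * z' 1 + z 1 * z' (tgen K p n ^ p ^ i) +
        f ^ p ^ i * ∑ ℓ ∈ Finset.Icc 1 (p - 1),
          pfCoeff K p ℓ *
            (z (tgen K p n ^ (p ^ (r + i) * ℓ)) * z' (tgen K p n ^ (p ^ (r + i) * (p - ℓ)))) := by
  rw [conv, LinearMap.comp_apply, LinearMap.comp_apply, DeltaMap_tgen_pow p K n r f hk,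
    Delta_t_pow p K n r f i]
  simp only [map_add, map_smul, map_sum, TensorProduct.map_tmul, LinearMap.mul'_apply,
    smul_eq_mul, Finset.mul_sum]

lemma conv_one (z z' : Module.Dual K (TruncAlg K p n)) :
    conv K p n r f z z' 1 = z 1 * z' 1 := by
  have hpn : 0 < p ^ n := pow_pos (Fact.out : p.Prime).pos n
  have h1 : (1 : TruncAlg K p n) = tgen K p n ^ 0 := (pow_zero _).symm
  rw [conv, LinearMap.comp_apply, LinearMap.comp_apply, h1, DeltaMap_tgen_pow p K n r f hpn,
    pow_zero, Algebra.TensorProduct.one_def, TensorProduct.map_tmul, LinearMap.mul'_apply, ← h1]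

end AuxLemmas

section MainLemma

variable (p : ℕ) [Fact p.Prime] (K : Type) [Field K] [CharP K p] (n r : ℕ) (f : K)

lemma Delta_t_pow_primitive {s : ℕ} (hn2r : n ≤ 2 * r) (hrs : r ≤ s) :
    Delta_t K p n r f ^ p ^ s =
      (tgen K p n ^ p ^ s) ⊗ₜ[K] 1 + 1 ⊗ₜ[K] (tgen K p n ^ p ^ s) := by
  have hp : p.Prime := Fact.out
  rw [Delta_t_pow p K n r f s]
  have hz : ∀ ℓ ∈ Finset.Icc 1 (p - 1),
      pfCoeff K p ℓ •
        ((tgen K p n ^ (p ^ (r + s) * ℓ)) ⊗ₜ[K] (tgen K p n ^ (p ^ (r + s) * (p - ℓ)))) = 0 := by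
    intro ℓ hℓ
    have h1 : 1 ≤ ℓ := (Finset.mem_Icc.mp hℓ).1
    have hle : p ^ n ≤ p ^ (r + s) * ℓ := by
      calc p ^ n ≤ p ^ (r + s) := Nat.pow_le_pow_right hp.pos (by omega)
        _ ≤ p ^ (r + s) * ℓ := Nat.le_mul_of_pos_right _ h1
    rw [tgen_pow_eq_zero p K n hle, TensorProduct.zero_tmul, smul_zero]
  rw [Finset.sum_congr rfl hz, Finset.sum_const_zero, smul_zero, add_zero]

lemma Delta_t_pow_mul {s : ℕ} (hn2r : n ≤ 2 * r) (hrs : r ≤ s) (a : ℕ) :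
    Delta_t K p n r f ^ (p ^ s * a) =
      ∑ k ∈ Finset.range (a + 1),
        (a.choose k) • ((tgen K p n ^ (p ^ s * k)) ⊗ₜ[K] (tgen K p n ^ (p ^ s * (a - k)))) := by
  rw [pow_mul, Delta_t_pow_primitive p K n r f hn2r hrs, add_pow]
  refine Finset.sum_congr rfl fun k hk => ?_
  rw [Algebra.TensorProduct.tmul_pow, Algebra.TensorProduct.tmul_pow, one_pow, one_pow,
    Algebra.TensorProduct.tmul_mul_tmul, mul_one, one_mul, ← pow_mul, ← pow_mul,
    mul_comm, ← nsmul_eq_mul]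

lemma conv_eval_mul (z z' : Module.Dual K (TruncAlg K p n)) {s : ℕ}
    (hn2r : n ≤ 2 * r) (hrs : r ≤ s) {a : ℕ} (ha : p ^ s * a < p ^ n) :
    conv K p n r f z z' (tgen K p n ^ (p ^ s * a)) =
      ∑ k ∈ Finset.range (a + 1),
        (a.choose k) • (z (tgen K p n ^ (p ^ s * k)) * z' (tgen K p n ^ (p ^ s * (a - k)))) := by
  rw [conv, LinearMap.comp_apply, LinearMap.comp_apply, DeltaMap_tgen_pow p K n r f ha,
    Delta_t_pow_mul p K n r f hn2r hrs a]
  simp only [map_sum, map_nsmul, TensorProduct.map_tmul, LinearMap.mul'_apply]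

lemma convPow_eval (hr : 0 < r) (hrn : r < n) (hn2r : n ≤ 2 * r)
    {s : ℕ} (hrs : r ≤ s) (hsn : s < n) (i : ℕ) (hi : i < n) :
    convPow K p n r f (zdual K p n (p ^ s)) p (tgen K p n ^ p ^ i)
      = if i = s - r then f ^ p ^ (s - r) else 0 := by
  have hp : p.Prime := Fact.out
  set z : Module.Dual K (TruncAlg K p n) := zdual K p n (p ^ s) with hzdef
  set w : ℕ → Module.Dual K (TruncAlg K p n) := convPow K p n r f z with hwdef
  have wsucc : ∀ m, w (m + 1) = conv K p n r f (w m) z := fun m => rfl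
  have hp2 : 2 ≤ p := hp.two_le
  have hps : p ^ s < p ^ n := Nat.pow_lt_pow_right hp.one_lt hsn
  have hpn : 0 < p ^ n := pow_pos hp.pos n
  have zval : ∀ k, z (tgen K p n ^ k) = if p ^ s = k then 1 else 0 :=
    fun k => zdual_tgen_pow p K n k hps
  have z1 : z 1 = 0 := by
    rw [show (1 : TruncAlg K p n) = tgen K p n ^ 0 from (pow_zero _).symm, zval,
      if_neg (pow_pos hp.pos s).ne']
  have w_one : ∀ m, w (m + 1) 1 = 0 := by
    intro m
    rw [wsucc, conv_one, z1, mul_zero]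
  have wfact : ∀ m, m ≤ p - 1 → w m (tgen K p n ^ (p ^ s * m)) = (m.factorial : K) := by
    intro m
    induction m with
    | zero =>
      intro _
      rw [mul_zero, hwdef]
      show zdual K p n 0 (tgen K p n ^ 0) = _
      rw [zdual_tgen_pow p K n 0 hpn, if_pos rfl, Nat.factorial_zero, Nat.cast_one]
    | succ m ih =>
      intro hm
      have hm' : m ≤ p - 1 := by omega
      have hlt : p ^ s * (m + 1) < p ^ n := by
        have h1 : p ^ s * (m + 1) ≤ p ^ s * (p - 1) := Nat.mul_le_mul_left _ hm
        have h2 : p ^ s * (p - 1) < p ^ s * p :=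
          (mul_lt_mul_iff_right₀ (pow_pos hp.pos s)).mpr (by omega)
        have h3 : p ^ s * p = p ^ (s + 1) := (pow_succ p s).symm
        have h4 : p ^ (s + 1) ≤ p ^ n := Nat.pow_le_pow_right hp.pos (by omega)
        omega
      rw [wsucc, conv_eval_mul p K n r f (w m) z hn2r hrs hlt,
        Finset.sum_eq_single m ?_ ?_]
      · have e1 : m + 1 - m = 1 := by omega
        rw [e1, mul_one, zval, if_pos rfl, mul_one, ih hm', Nat.choose_succ_self_right,
          nsmul_eq_mul, Nat.factorial_succ, Nat.cast_mul]
      · intro k hk hkm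
        rw [zval, if_neg, mul_zero, smul_zero]
        intro h
        have h1 : 1 = m + 1 - k :=
          Nat.eq_of_mul_eq_mul_left (pow_pos hp.pos s) (by rw [mul_one]; exact h)
        have hk' : k < m + 2 := Finset.mem_range.mp hk
        omega
      · intro h
        exact absurd (Finset.mem_range.mpr (by omega)) h
  have hpi : p ^ i < p ^ n := Nat.pow_lt_pow_right hp.one_lt hi
  have hwp : w p = conv K p n r f (w (p - 1)) z := by
    conv_lhs => rw [show p = (p - 1) + 1 by omega]
    exact wsucc (p - 1)
  have wp1_one : w (p - 1) 1 = 0 := by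
    rw [show p - 1 = (p - 2) + 1 by omega]
    exact w_one (p - 2)
  rw [hwp, conv_eval p K n r f (w (p - 1)) z i hpi, z1, mul_zero, wp1_one, zero_mul,
    zero_add, zero_add]
  by_cases hcase : i = s - r
  · have hri : r + i = s := by omega
    rw [if_pos hcase, hri]
    rw [Finset.sum_eq_single (p - 1) ?_ ?_]
    · have e1 : p - (p - 1) = 1 := by omega
      rw [e1, mul_one, zval, if_pos rfl, mul_one]
      have e2 : p ^ s * (p - 1) = p ^ s * ↑(p-1) := rfl
      rw [wfact (p - 1) le_rfl]
      have e3 : pfCoeff K p (p - 1) = (((p - 1).factorial : ℕ) : K)⁻¹ := by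
        rw [pfCoeff, e1, Nat.factorial_one, mul_one]
      have hfne : (((p - 1).factorial : ℕ) : K) ≠ 0 := by
        intro h0
        rw [CharP.cast_eq_zero_iff K p] at h0
        exact absurd ((Nat.Prime.dvd_factorial hp).mp h0) (by omega)
      rw [e3, inv_mul_cancel₀ hfne, mul_one, hcase]
    · intro ℓ hℓ hℓne
      obtain ⟨h1ℓ, hℓp⟩ := Finset.mem_Icc.mp hℓ
      rw [zval, if_neg, mul_zero, mul_zero]
      intro h
      have h1 : 1 = p - ℓ :=
        Nat.eq_of_mul_eq_mul_left (pow_pos hp.pos s) (by rw [mul_one]; exact h)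
      have hp2 : 2 ≤ p := hp.two_le
      omega
    · intro h
      exact absurd (Finset.mem_Icc.mpr ⟨by have := hp.two_le; omega, le_rfl⟩) h
  · rw [if_neg hcase]
    have hzero : ∀ ℓ ∈ Finset.Icc 1 (p - 1),
        pfCoeff K p ℓ * (w (p - 1) (tgen K p n ^ (p ^ (r + i) * ℓ)) *
          z (tgen K p n ^ (p ^ (r + i) * (p - ℓ)))) = 0 := by
      intro ℓ hℓ
      obtain ⟨h1ℓ, hℓp⟩ := Finset.mem_Icc.mp hℓ
      have hp2 : 2 ≤ p := hp.two_le
      rw [zval, if_neg, mul_zero, mul_zero]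
      intro h
      rcases Nat.lt_trichotomy (r + i) s with hlt | heq | hgt
      · have h1 : p ^ (r + i) * (p - ℓ) < p ^ (r + i) * p :=
          (mul_lt_mul_iff_right₀ (pow_pos hp.pos _)).mpr (by omega)
        have h2 : p ^ (r + i) * p = p ^ (r + i + 1) := (pow_succ _ _).symm
        have h3 : p ^ (r + i + 1) ≤ p ^ s := Nat.pow_le_pow_right hp.pos (by omega)
        omega
      · exact hcase (by omega)
      · have h1 : p ^ s < p ^ (r + i) := Nat.pow_lt_pow_right hp.one_lt hgt
        have h2 : p ^ (r + i) ≤ p ^ (r + i) * (p - ℓ) :=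
          Nat.le_mul_of_pos_right _ (by omega)
        omega
    rw [Finset.sum_congr rfl hzero, Finset.sum_const_zero, mul_zero]

end MainLemma

/-- In `H = H_{n,r,f}^*`, for `r ≤ s ≤ n-1` and `0 ≤ i ≤ n-1`,
the convolution power `z_{p^s}^p` satisfies `z_{p^s}^p(t^{p^i}) = f^{p^{s-r}}·δ_{i,s-r}`;
in particular `z_{p^s}^p ≠ 0`. -/
theorem convPow_zdual_p_apply
    (p : ℕ) [Fact p.Prime] (F : Type) [Field F] [Fintype F] [CharP F p]
    (n r : ℕ) (hr : 0 < r) (hrn : r < n) (hn2r : n ≤ 2 * r)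
    (f : LaurentSeries F) (hf : f ≠ 0) :
    ∀ s : ℕ, r ≤ s → s < n →
      (∀ i : ℕ, i < n →
        convPow (LaurentSeries F) p n r f (zdual (LaurentSeries F) p n (p ^ s)) p
            (tgen (LaurentSeries F) p n ^ (p ^ i))
          = if i = s - r then f ^ (p ^ (s - r)) else 0) ∧
      convPow (LaurentSeries F) p n r f (zdual (LaurentSeries F) p n (p ^ s)) p ≠ 0 := by
  haveI : CharP (LaurentSeries F) p :=
    charP_of_injective_algebraMap (algebraMap F (LaurentSeries F)).injective p
  intro s hrs hsn
  refine ⟨fun i hi => convPow_eval p (LaurentSeries F) n r f hr hrn hn2r hrs hsn i hi, ?_⟩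
  intro h0
  have hsrn : s - r < n := by omega
  have h := convPow_eval p (LaurentSeries F) n r f hr hrn hn2r hrs hsn (s - r) hsrn
  rw [if_pos rfl, h0, LinearMap.zero_apply] at h
  exact pow_ne_zero _ hf h.symm


end
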